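/- arXiv:2108.00844 — 2 statements merged into one kernel-verified Lean document; each statement's English description precedes it below -/
import Mathlib

section
/- For every integer n ≥ 1, one has the exact identity s_n/(ε·s_{n−1}) = (1 − 1/(6n))(1 − 1/(2n))(1 − 5/(6n)) · (S+n)/(S+n−1); moreover, defining φ_n by s_n/(ε·s_{n−1}) = 1 − 1/(2n) + (5/36 − S)/n² + (5/72 − S/2 + S²)/n³ + φ_n/n⁴, one has 0.05 < φ_n < 2.19 for all n ≥ 1, and φ_n < 0.11 for all n ≥ 2. -/
open Real Filter

/-- `S = 13591409/545140134` from the Chudnovsky series. -/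
noncomputable def S : ℝ := 13591409 / 545140134

/-- `ε = 1728/640320³ = 53360⁻³`. -/
noncomputable def eps : ℝ := 1728 / 640320 ^ 3

/-- The terms `s_k = (6k)!/((3k)!·(k!)³) · (k+S)/640320^{3k}` of the Chudnovsky series. -/
noncomputable def s (k : ℕ) : ℝ :=
  (Nat.factorial (6 * k) : ℝ) / ((Nat.factorial (3 * k) : ℝ) * (Nat.factorial k : ℝ) ^ 3)
    * ((k : ℝ) + S) / 640320 ^ (3 * k)

lemma fact_add_six' (a : ℕ) :
    (a+6).factorial = a.factorial * ((a+1)*(a+2)*(a+3)*(a+4)*(a+5)*(a+6)) := by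
  simp [Nat.factorial_succ]; ring

lemma fact_add_three' (a : ℕ) : (a+3).factorial = a.factorial * ((a+1)*(a+2)*(a+3)) := by
  simp [Nat.factorial_succ]; ring

lemma Spos' : (0:ℝ) < S := by norm_num [S]

lemma ratio_eq' (m : ℕ) :
    s (m+1) / (eps * s m) =
      (1 - 1 / (6 * ((m:ℝ)+1))) * (1 - 1 / (2 * ((m:ℝ)+1))) * (1 - 5 / (6 * ((m:ℝ)+1))) *
        ((S + ((m:ℝ)+1)) / (S + ((m:ℝ)+1) - 1)) := by
  have h6 : ((6*(m+1)).factorial : ℝ)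
      = ((6*m).factorial : ℝ) *
          ((6*(m:ℝ)+1)*(6*(m:ℝ)+2)*(6*(m:ℝ)+3)*(6*(m:ℝ)+4)*(6*(m:ℝ)+5)*(6*(m:ℝ)+6)) := by
    rw [show 6*(m+1) = 6*m+6 by ring, fact_add_six']; push_cast; ring
  have h3 : ((3*(m+1)).factorial : ℝ)
      = ((3*m).factorial : ℝ) * ((3*(m:ℝ)+1)*(3*(m:ℝ)+2)*(3*(m:ℝ)+3)) := by
    rw [show 3*(m+1) = 3*m+3 by ring, fact_add_three']; push_cast; ring
  have h1 : ((m+1).factorial : ℝ) = (m.factorial : ℝ) * ((m:ℝ)+1) := by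
    rw [Nat.factorial_succ]; push_cast; ring
  have hp : (640320:ℝ) ^ (3*(m+1)) = 640320 ^ (3*m) * 640320 ^ 3 := by
    rw [show 3*(m+1) = 3*m+3 by ring, pow_add]
  have hm : (0:ℝ) ≤ (m:ℝ) := Nat.cast_nonneg m
  have hS : (0:ℝ) < S := Spos'
  have na : ((6*m).factorial : ℝ) ≠ 0 := by positivity
  have nb : ((3*m).factorial : ℝ) ≠ 0 := by positivity
  have nc : ((m.factorial : ℝ)) ≠ 0 := by positivity
  have np : (640320:ℝ) ^ (3*m) ≠ 0 := by positivity
  have nq1 : (6*(m:ℝ)+1) ≠ 0 := by positivity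
  have nq2 : (6*(m:ℝ)+2) ≠ 0 := by positivity
  have nq3 : (6*(m:ℝ)+3) ≠ 0 := by positivity
  have nq4 : (6*(m:ℝ)+4) ≠ 0 := by positivity
  have nq5 : (6*(m:ℝ)+5) ≠ 0 := by positivity
  have nq6 : (6*(m:ℝ)+6) ≠ 0 := by positivity
  have nr1 : (3*(m:ℝ)+1) ≠ 0 := by positivity
  have nr2 : (3*(m:ℝ)+2) ≠ 0 := by positivity
  have nr3 : (3*(m:ℝ)+3) ≠ 0 := by positivity
  have nw : ((m:ℝ)+1) ≠ 0 := by positivity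
  have nmS : ((m:ℝ)+S) ≠ 0 := by positivity
  have nmS' : (S + ((m:ℝ)+1) - 1) ≠ 0 := by
    have h : S + ((m:ℝ)+1) - 1 = (m:ℝ) + S := by ring
    rw [h]; exact nmS
  have n6 : (6*((m:ℝ)+1)) ≠ 0 := by positivity
  have n2 : (2*((m:ℝ)+1)) ≠ 0 := by positivity
  simp only [s, eps, h6, h3, h1, hp]
  push_cast
  field_simp
  ring

lemma gen_id' (x T : ℝ) (hx : x ≠ 0) (hd : T + x - 1 ≠ 0) :
    (1 - 1 / (6 * x)) * (1 - 1 / (2 * x)) * (1 - 5 / (6 * x)) * ((T + x) / (T + x - 1)) =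
      1 - 1 / (2 * x) + (5 / 36 - T) / x ^ 2 + (5 / 72 - T / 2 + T ^ 2) / x ^ 3 +
        (((5 - 46*T + 108*T^2 - 72*T^3) / 72) * x / (T + x - 1)) / x ^ 4 := by
  field_simp
  ring

lemma hK' : (5 - 46*S + 108*S^2 - 72*S^3) / 72
    = 1102284178949306661534080 / 20250440876772055600490763 := by
  norm_num [S]

lemma phi_val' (x φ : ℝ) (hx1 : (1:ℝ) ≤ x)
    (hφ : (1 - 1 / (6 * x)) * (1 - 1 / (2 * x)) * (1 - 5 / (6 * x)) * ((S + x) / (S + x - 1)) =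
        1 - 1 / (2 * x) + (5 / 36 - S) / x ^ 2 + (5 / 72 - S / 2 + S ^ 2) / x ^ 3 + φ / x ^ 4) :
    φ = (1102284178949306661534080 / 20250440876772055600490763) * x / (S + x - 1) := by
  have hS : (0:ℝ) < S := Spos'
  have hx0 : (0:ℝ) < x := by linarith
  have hd : (0:ℝ) < S + x - 1 := by linarith
  have h4 : (x:ℝ) ^ 4 ≠ 0 := by positivity
  rw [gen_id' x S (ne_of_gt hx0) (ne_of_gt hd), hK'] at hφ
  have h2 : ((1102284178949306661534080 / 20250440876772055600490763) * x / (S + x - 1)) / x ^ 4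
      = φ / x ^ 4 := by linarith
  have h3 := congrArg (fun y => y * x ^ 4) h2
  simp only [div_mul_cancel₀ _ h4] at h3
  exact h3.symm

lemma phi_bounds' (x φ : ℝ) (hx1 : (1:ℝ) ≤ x)
    (hφ' : φ = (1102284178949306661534080 / 20250440876772055600490763) * x / (S + x - 1)) :
    (0.05 < φ ∧ φ < 2.19) ∧ ((2:ℝ) ≤ x → φ < 0.11) := by
  have hS : (0:ℝ) < S := Spos'
  have hd : (0:ℝ) < S + x - 1 := by linarith
  rw [hφ']
  refine ⟨⟨?_, ?_⟩, fun hx2 => ?_⟩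
  · rw [lt_div_iff₀ hd, S]; nlinarith
  · rw [div_lt_iff₀ hd, S]; nlinarith
  · rw [div_lt_iff₀ hd, S]; nlinarith

theorem ratio_identity_and_phi_bounds (n : ℕ) (hn : 1 ≤ n) :
    s n / (eps * s (n - 1)) =
      (1 - 1 / (6 * (n : ℝ))) * (1 - 1 / (2 * (n : ℝ))) * (1 - 5 / (6 * (n : ℝ))) *
        ((S + (n : ℝ)) / (S + (n : ℝ) - 1)) ∧
    ∀ φ : ℝ,
      s n / (eps * s (n - 1)) =
        1 - 1 / (2 * (n : ℝ)) + (5 / 36 - S) / (n : ℝ) ^ 2 +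
          (5 / 72 - S / 2 + S ^ 2) / (n : ℝ) ^ 3 + φ / (n : ℝ) ^ 4 →
      (0.05 < φ ∧ φ < 2.19) ∧ (2 ≤ n → φ < 0.11) := by
  obtain ⟨m, rfl⟩ : ∃ m, n = m + 1 := ⟨n - 1, (Nat.succ_pred_eq_of_pos hn).symm⟩
  have hsub : m + 1 - 1 = m := rfl
  have hcast : ((m+1 : ℕ) : ℝ) = (m:ℝ) + 1 := by push_cast; ring
  have hx1 : (1:ℝ) ≤ (m:ℝ) + 1 := by
    have : (0:ℝ) ≤ (m:ℝ) := Nat.cast_nonneg m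
    linarith
  constructor
  · rw [hsub, hcast]; exact ratio_eq' m
  · intro φ hφ
    rw [hsub, hcast, ratio_eq' m] at hφ
    have hv := phi_val' ((m:ℝ)+1) φ hx1 hφ
    have hb := phi_bounds' ((m:ℝ)+1) φ hx1 hv
    refine ⟨hb.1, fun h2 => hb.2 ?_⟩
    have h1m : (1:ℕ) ≤ m := by omega
    have : (1:ℝ) ≤ (m:ℝ) := by exact_mod_cast h1m
    linarith
end

section
/- For all integers n ≥ 1 and k ≥ 1, one has s_{n+k}/(ε^k · s_n) < 1 − k/(2n) + ((3/8)k² + (19/72 − S)k)/n² + 1.2·k⁶/n³. -/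
open Real Filter

/-- single-step ratio `s (j+1) / (eps * s j)` as a rational function. -/
noncomputable def rr (x : ℝ) : ℝ :=
  ((x + 1/6) * (x + 1/2) * (x + 5/6) * (x + 1 + 13591409/545140134)) /
    ((x + 1)^3 * (x + 13591409/545140134))

/-- telescoping comparison function. -/
noncomputable def Q (x : ℝ) : ℝ :=
  (x^2 + (1646010181/3634267560) * x + 611440808026517879/5943555313950759120) / (x - 1/40)

lemma rr_pos (x : ℝ) (hx : 0 ≤ x) : 0 < rr x := by
  unfold rr
  have h1 : (0:ℝ) < x + 1/6 := by linarith
  have h2 : (0:ℝ) < x + 1/2 := by linarith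
  have h3 : (0:ℝ) < x + 5/6 := by linarith
  have h4 : (0:ℝ) < x + 1 + 13591409/545140134 := by linarith
  have h5 : (0:ℝ) < x + 1 := by linarith
  have h6 : (0:ℝ) < x + 13591409/545140134 := by linarith
  exact div_pos (mul_pos (mul_pos (mul_pos h1 h2) h3) h4)
    (mul_pos (pow_pos h5 3) h6)

lemma Q_pos (x : ℝ) (hx : 1 ≤ x) : 0 < Q x := by
  unfold Q
  have h1 : (0:ℝ) < x - 1/40 := by linarith
  have h2 : (0:ℝ) < x^2 + (1646010181/3634267560) * x + 611440808026517879/5943555313950759120 := by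
    nlinarith [sq_nonneg x]
  exact div_pos h2 h1

lemma s_pos (j : ℕ) : 0 < s j := by
  unfold s S
  have h1 : (0:ℝ) < (Nat.factorial (6*j) : ℝ) := by exact_mod_cast (6*j).factorial_pos
  have h2 : (0:ℝ) < (Nat.factorial (3*j) : ℝ) := by exact_mod_cast (3*j).factorial_pos
  have h3 : (0:ℝ) < (Nat.factorial j : ℝ) := by exact_mod_cast j.factorial_pos
  have h4 : (0:ℝ) < (j:ℝ) + 13591409/545140134 := by positivity
  have h5 : (0:ℝ) < (640320:ℝ) ^ (3*j) := by positivity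
  exact div_pos (mul_pos (div_pos h1 (mul_pos h2 (pow_pos h3 3))) h4) h5

lemma s_succ (j : ℕ) : s (j + 1) = eps * s j * rr (j : ℝ) := by
  have e6 : 6 * (j + 1) = 6 * j + 6 := by ring
  have e3 : 3 * (j + 1) = 3 * j + 3 := by ring
  have f6 : ((Nat.factorial (6*j+6)) : ℝ) =
      (6*(j:ℝ)+6)*(6*(j:ℝ)+5)*(6*(j:ℝ)+4)*(6*(j:ℝ)+3)*(6*(j:ℝ)+2)*(6*(j:ℝ)+1)*((Nat.factorial (6*j)) : ℝ) := by
    have h : 6*j+6 = (((((6*j+1)+1)+1)+1)+1)+1 := by ring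
    rw [h, Nat.factorial_succ, Nat.factorial_succ, Nat.factorial_succ, Nat.factorial_succ,
      Nat.factorial_succ, Nat.factorial_succ]
    push_cast; ring
  have f3 : ((Nat.factorial (3*j+3)) : ℝ) =
      (3*(j:ℝ)+3)*(3*(j:ℝ)+2)*(3*(j:ℝ)+1)*((Nat.factorial (3*j)) : ℝ) := by
    have h : 3*j+3 = ((3*j+1)+1)+1 := by ring
    rw [h, Nat.factorial_succ, Nat.factorial_succ, Nat.factorial_succ]
    push_cast; ring
  have f1 : ((Nat.factorial (j+1)) : ℝ) = ((j:ℝ)+1)*((Nat.factorial j) : ℝ) := by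
    rw [Nat.factorial_succ]; push_cast; ring
  have fp : (640320:ℝ) ^ (3*j+3) = 640320 ^ (3*j) * 640320 ^ 3 := pow_add _ _ _
  have h1 : ((Nat.factorial (6*j)) : ℝ) ≠ 0 := by
    exact_mod_cast (6*j).factorial_pos.ne'
  have h2 : ((Nat.factorial (3*j)) : ℝ) ≠ 0 := by
    exact_mod_cast (3*j).factorial_pos.ne'
  have h3 : ((Nat.factorial j) : ℝ) ≠ 0 := by
    exact_mod_cast j.factorial_pos.ne'
  have h4 : ((j:ℝ) + 13591409/545140134) ≠ 0 := by positivity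
  have h5 : (640320:ℝ) ^ (3*j) ≠ 0 := by positivity
  have h6 : ((j:ℝ) + 1) ≠ 0 := by positivity
  unfold s eps rr S
  rw [e6, e3, f6, f3, f1, fp]
  push_cast
  field_simp
  ring

lemma s_add (n : ℕ) (k : ℕ) :
    s (n + k) = eps ^ k * s n * ∏ i ∈ Finset.range k, rr ((n + i : ℕ) : ℝ) := by
  induction k with
  | zero => simp
  | succ k ih =>
    have : n + (k+1) = (n + k) + 1 := by ring
    rw [this, s_succ (n+k), ih, Finset.prod_range_succ, pow_succ]
    ring

set_option maxHeartbeats 2000000 in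
lemma step (x : ℝ) (hx : 1 ≤ x) : rr x ^ 2 * Q (x + 1) ≤ Q x := by
  have hd1 : (0:ℝ) < x - 1/40 := by linarith
  have hd2 : (0:ℝ) < x + 1 - 1/40 := by linarith
  have hR : (0:ℝ) < (x + 1)^3 * (x + 13591409/545140134) := by positivity
  have hy : (0:ℝ) ≤ x - 1 := by linarith
  have hkey : ((x + 1)^3 * (x + 13591409/545140134))^2 * ((x + 1 - 1/40) *
        (x^2 + (1646010181/3634267560) * x + 611440808026517879/5943555313950759120))
      - ((x + 1/6) * (x + 1/2) * (x + 5/6) * (x + 1 + 13591409/545140134))^2 *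
        ((x - 1/40) * ((x+1)^2 + (1646010181/3634267560) * (x+1) + 611440808026517879/5943555313950759120))
      = ((6303522351601450192989140443213519293889:ℝ)/13565126311677045814280583177317058969600) + ((38928572635892011568566398839200548899833:ℝ)/20347689467515568721420874765975588454400)*(x-1) + ((261690510154871528856691870177155464353:ℝ)/80319826845456192321398189865693112320)*(x-1)^2 + ((33878085612565200767439812288566974404423:ℝ)/11445575325477507405799242055861268505600)*(x-1)^3 + ((35569395993226596455738892580885445903:ℝ)/23122374394904055365250994052244986880)*(x-1)^4 + ((41016293887788320515735866823931777401:ℝ)/90837899408551646077771762348105305600)*(x-1)^5 + ((1589683468494043227665813477086035289:ℝ)/23550566513328204538681568016175449600)*(x-1)^6 + ((96254007921710950959939919:ℝ)/25920564322268231168628176640)*(x-1)^7 := by ring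
  have hges : (0:ℝ) ≤ ((x + 1)^3 * (x + 13591409/545140134))^2 * ((x + 1 - 1/40) *
        (x^2 + (1646010181/3634267560) * x + 611440808026517879/5943555313950759120))
      - ((x + 1/6) * (x + 1/2) * (x + 5/6) * (x + 1 + 13591409/545140134))^2 *
        ((x - 1/40) * ((x+1)^2 + (1646010181/3634267560) * (x+1) + 611440808026517879/5943555313950759120)) := by
    rw [hkey]
    have p2 : (0:ℝ) ≤ (x-1)^2 := sq_nonneg _
    have p3 : (0:ℝ) ≤ (x-1)^3 := pow_nonneg hy 3
    have p4 : (0:ℝ) ≤ (x-1)^4 := pow_nonneg hy 4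
    have p5 : (0:ℝ) ≤ (x-1)^5 := pow_nonneg hy 5
    have p6 : (0:ℝ) ≤ (x-1)^6 := pow_nonneg hy 6
    have p7 : (0:ℝ) ≤ (x-1)^7 := pow_nonneg hy 7
    linarith [p2, p3, p4, p5, p6, p7, hy]
  unfold rr Q
  rw [div_pow, div_mul_div_comm, div_le_div_iff₀ (by positivity) hd1]
  nlinarith [hges]

lemma telescope (n : ℕ) (hn : 1 ≤ n) (k : ℕ) :
    (∏ i ∈ Finset.range k, rr ((n + i : ℕ) : ℝ)) ^ 2 * Q ((n + k : ℕ) : ℝ) ≤ Q (n : ℝ) := by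
  induction k with
  | zero => simp
  | succ k ih =>
    have hx : (1:ℝ) ≤ ((n + k : ℕ) : ℝ) := by
      have : 1 ≤ n + k := le_trans hn (Nat.le_add_right n k)
      exact_mod_cast this
    have hcast : ((n + (k+1) : ℕ) : ℝ) = ((n + k : ℕ) : ℝ) + 1 := by push_cast; ring
    have hP2 : (0:ℝ) ≤ (∏ i ∈ Finset.range k, rr ((n + i : ℕ) : ℝ)) ^ 2 := sq_nonneg _
    calc (∏ i ∈ Finset.range (k+1), rr ((n + i : ℕ) : ℝ)) ^ 2 * Q ((n + (k+1) : ℕ) : ℝ)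
        = (∏ i ∈ Finset.range k, rr ((n + i : ℕ) : ℝ)) ^ 2 *
            (rr ((n + k : ℕ) : ℝ) ^ 2 * Q (((n + k : ℕ) : ℝ) + 1)) := by
          rw [Finset.prod_range_succ, hcast]; ring
      _ ≤ (∏ i ∈ Finset.range k, rr ((n + i : ℕ) : ℝ)) ^ 2 * Q ((n + k : ℕ) : ℝ) := by
          exact mul_le_mul_of_nonneg_left (step _ hx) hP2
      _ ≤ Q (n : ℝ) := ih

set_option maxHeartbeats 4000000 in
theorem ratio_power_upper_bound (n k : ℕ) (hn : 1 ≤ n) (hk : 1 ≤ k) :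
    s (n + k) / (eps ^ k * s n) <
      1 - (k : ℝ) / (2 * (n : ℝ)) +
        ((3 / 8) * (k : ℝ) ^ 2 + (19 / 72 - S) * (k : ℝ)) / (n : ℝ) ^ 2 +
        1.2 * (k : ℝ) ^ 6 / (n : ℝ) ^ 3 := by
  obtain ⟨a, rfl⟩ : ∃ a, n = a + 1 := ⟨n - 1, by omega⟩
  obtain ⟨b, rfl⟩ : ∃ b, k = b + 1 := ⟨k - 1, by omega⟩
  set n := a + 1 with hna
  set k := b + 1 with hkb
  have hA : (0:ℝ) < eps ^ k * s n := by
    have : (0:ℝ) < eps := by unfold eps; norm_num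
    exact mul_pos (pow_pos this k) (s_pos n)
  rw [s_add n k, mul_div_cancel_left₀ _ hA.ne']
  set P := ∏ i ∈ Finset.range k, rr ((n + i : ℕ) : ℝ) with hPdef
  have hP : 0 < P := by
    apply Finset.prod_pos
    intro i _
    exact rr_pos _ (Nat.cast_nonneg _)
  -- notation
  have ha0 : (0:ℝ) ≤ (a:ℝ) := Nat.cast_nonneg a
  have hb0 : (0:ℝ) ≤ (b:ℝ) := Nat.cast_nonneg b
  have hmn : ((n : ℕ) : ℝ) = (a:ℝ) + 1 := by rw [hna]; push_cast; ring
  have hmk : ((k : ℕ) : ℝ) = (b:ℝ) + 1 := by rw [hkb]; push_cast; ring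
  have hnk : ((n + k : ℕ) : ℝ) = (a:ℝ) + (b:ℝ) + 2 := by rw [hna, hkb]; push_cast; ring
  have hn1 : (1:ℝ) ≤ ((n:ℕ):ℝ) := by rw [hmn]; linarith
  set B := 1 - ((k:ℕ) : ℝ) / (2 * ((n:ℕ) : ℝ)) +
        ((3 / 8) * ((k:ℕ) : ℝ) ^ 2 + (19 / 72 - S) * ((k:ℕ) : ℝ)) / ((n:ℕ) : ℝ) ^ 2 +
        1.2 * ((k:ℕ) : ℝ) ^ 6 / ((n:ℕ) : ℝ) ^ 3 with hBdef
  set N := 360 * ((n:ℕ):ℝ)^3 - 180 * ((k:ℕ):ℝ) * ((n:ℕ):ℝ)^2 +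
      (135 * ((k:ℕ):ℝ)^2 + (2605300305/30285563) * ((k:ℕ):ℝ)) * ((n:ℕ):ℝ) +
      432 * ((k:ℕ):ℝ)^6 with hNdef
  have hnne : ((n:ℕ):ℝ) ≠ 0 := by rw [hmn]; positivity
  have hB : B = N / (360 * ((n:ℕ):ℝ)^3) := by
    rw [hBdef, hNdef]; unfold S
    field_simp
    ring
  have hNpos : 0 < N := by
    have h1 : (0:ℝ) ≤ ((n:ℕ):ℝ) * (((k:ℕ):ℝ) - 2/3 * ((n:ℕ):ℝ))^2 := by positivity
    have h2 : (0:ℝ) < ((n:ℕ):ℝ)^3 := by rw [hmn]; positivity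
    have h3 : (0:ℝ) ≤ ((k:ℕ):ℝ) * ((n:ℕ):ℝ) := by positivity
    have h4 : (0:ℝ) ≤ ((k:ℕ):ℝ)^6 := by positivity
    rw [hNdef]; nlinarith [h1, h2, h3, h4]
  have hBpos : 0 < B := by
    rw [hB]
    apply div_pos hNpos
    rw [hmn]; positivity
  -- key polynomial inequality
  have hnpos : (0:ℝ) < ((n:ℕ):ℝ) := by rw [hmn]; linarith
  have hden1 : (0:ℝ) < ((n:ℕ):ℝ) - 1/40 := by rw [hmn]; linarith
  have hden2 : (0:ℝ) < ((n+k:ℕ):ℝ) - 1/40 := by rw [hnk]; linarith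
  have hkey : ((((n:ℕ):ℝ))^2 + (1646010181/3634267560) * (((n:ℕ):ℝ)) + 611440808026517879/5943555313950759120) *
        ((360 * ((n:ℕ):ℝ)^3)^2 * (((n+k:ℕ):ℝ) - 1/40)) <
      N^2 * ((((n+k:ℕ):ℝ))^2 + (1646010181/3634267560) * (((n+k:ℕ):ℝ)) + 611440808026517879/5943555313950759120) *
        (((n:ℕ):ℝ) - 1/40) := by
    have hposG : (0:ℝ) < ((6038216753581465112082090053175726176159:ℝ)/2019081491197548400092727024706400) + ((51147619122135974723721685273947284553799:ℝ)/2019081491197548400092727024706400)*(b:ℝ) + ((904032201188867309667628999382512989045419:ℝ)/8076325964790193600370908098825600)*(b:ℝ)^2 + ((7438913261075543443660654883971629:ℝ)/22222706037609937558837600)*(b:ℝ)^3 + ((1878653544742009493568238822673577:ℝ)/2539737832869707149581440)*(b:ℝ)^4 + ((7928753465962114519388254717634127:ℝ)/6349344582174267873953600)*(b:ℝ)^5 + ((184516684694525455802506851216927:ℝ)/113381153253111926320600)*(b:ℝ)^6 + ((4551029626429650702487035330922881:ℝ)/2777838254701242194854700)*(b:ℝ)^7 + ((116319066736571059023230607:ℝ)/91721532622696900)*(b:ℝ)^8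 + ((622890934490126362655673:ℝ)/833832114751790)*(b:ℝ)^9 + ((684967714367735658240576:ℝ)/2084580286879475)*(b:ℝ)^10 + ((2394930138300013074907536:ℝ)/22930383155674225)*(b:ℝ)^11 + ((519225755748042802240314:ℝ)/22930383155674225)*(b:ℝ)^12 + ((2266681988573028:ℝ)/757139075)*(b:ℝ)^13 + ((909792:ℝ)/5)*(b:ℝ)^14 + ((16545279113066963979996175554275469773987:ℝ)/1514311118398161300069545268529800)*(a:ℝ) + ((236992947202599546648331426640317806018923:ℝ)/3028622236796322600139090537059600)*(a:ℝ)*(b:ℝ) + ((880781082312017348327578465901971049002669:ℝ)/3028622236796322600139090537059600)*(a:ℝ)*(b:ℝ)^2 + ((3306987098879318123299987285587679:ℝ)/4444541207521987511767520)*(a:ℝ)*(b:ℝ)^3 + ((57801367924925265628974067013507:ℝ)/39683403638589174212210)*(a:ℝ)*(b:ℝ)^4 + ((7184585564165281458438423816476019:ℝ)/3174672291087133936976800)*(a:ℝ)*(b:ℝ)^5 + ((553423753486636844535593195586263:ℝ)/198417018192945871061050)*(a:ℝ)*(b:ℝ)^6 + ((7470441009936969644398071859792951:ℝ)/2777838254701242194854700)*(a:ℝ)*(b:ℝ)^7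 + ((36656074678609184995716417:ℝ)/18344306524539380)*(a:ℝ)*(b:ℝ)^8 + ((938879944961748501304953:ℝ)/833832114751790)*(a:ℝ)*(b:ℝ)^9 + ((981138470326431041743164:ℝ)/2084580286879475)*(a:ℝ)*(b:ℝ)^10 + ((3230042975410632235087248:ℝ)/22930383155674225)*(a:ℝ)*(b:ℝ)^11 + ((651255486795274198770684:ℝ)/22930383155674225)*(a:ℝ)*(b:ℝ)^12 + ((520067533778208:ℝ)/151427815)*(a:ℝ)*(b:ℝ)^13 + (186624:ℝ)*(a:ℝ)*(b:ℝ)^14 + ((3210143224286547227142377101063416959783:ℝ)/173064127816932720007948030689120)*(a:ℝ)^2 + ((19596183033336640573709062101936189459799:ℝ)/173064127816932720007948030689120)*(a:ℝ)^2*(b:ℝ) + ((47207043864757442724097624443046373873155:ℝ)/138451302253546176006358424551296)*(a:ℝ)^2*(b:ℝ)^2 + ((429453836361787781509035792055497:ℝ)/634934458217426787395360)*(a:ℝ)^2*(b:ℝ)^3 + ((517600502458361312540630401964641:ℝ)/507947566573941429916288)*(a:ℝ)^2*(b:ℝ)^4 + ((231807501692431416581605473624837:ℝ)/181409845204979082112960)*(a:ℝ)^2*(b:ℝ)^5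 + ((216285865593740106405901899877807:ℝ)/158733614554356696848840)*(a:ℝ)^2*(b:ℝ)^6 + ((330170872342520107907722381137691:ℝ)/277783825470124219485470)*(a:ℝ)^2*(b:ℝ)^7 + ((7398614907876534350702643:ℝ)/9172153262269690)*(a:ℝ)^2*(b:ℝ)^8 + ((12390975539873748:ℝ)/30285563)*(a:ℝ)^2*(b:ℝ)^9 + ((2052367445067552:ℝ)/13766165)*(a:ℝ)^2*(b:ℝ)^10 + ((5571046875585024:ℝ)/151427815)*(a:ℝ)^2*(b:ℝ)^11 + ((831634745404032:ℝ)/151427815)*(a:ℝ)^2*(b:ℝ)^12 + (373248:ℝ)*(a:ℝ)^2*(b:ℝ)^13 + ((11342501285830664095613631184552822201277:ℝ)/605724447359264520027818107411920)*(a:ℝ)^3 + ((31314457056406385125243217439309832116143:ℝ)/302862223679632260013909053705960)*(a:ℝ)^3*(b:ℝ) + ((650105955087789963271666216242041908996871:ℝ)/2422897789437058080111272429647680)*(a:ℝ)^3*(b:ℝ)^2 + ((374356564783398086546688318865465:ℝ)/888908241504397502353504)*(a:ℝ)^3*(b:ℝ)^3 + ((25941279560550092849340903:ℝ)/58701780878526016)*(a:ℝ)^3*(b:ℝ)^4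 + ((12710439617092106038662771:ℝ)/36688613049078760)*(a:ℝ)^3*(b:ℝ)^5 + ((1099699796704254253132521:ℝ)/4586076631134845)*(a:ℝ)^3*(b:ℝ)^6 + ((736409651332463372619354:ℝ)/4586076631134845)*(a:ℝ)^3*(b:ℝ)^7 + ((405278829959904:ℝ)/4326509)*(a:ℝ)^3*(b:ℝ)^8 + (41135040:ℝ)*(a:ℝ)^3*(b:ℝ)^9 + (12317184:ℝ)*(a:ℝ)^3*(b:ℝ)^10 + (2239488:ℝ)*(a:ℝ)^3*(b:ℝ)^11 + (186624:ℝ)*(a:ℝ)^3*(b:ℝ)^12 + ((37585136382350626352172733561481:ℝ)/3333405905641490633825640)*(a:ℝ)^4 + ((8190554532435631962847412440124:ℝ)/138891912735062109742735)*(a:ℝ)^4*(b:ℝ) + ((47643071047913330832536035925713:ℝ)/333340590564149063382564)*(a:ℝ)^4*(b:ℝ)^2 + ((19290750786236755835223:ℝ)/95295098828776)*(a:ℝ)^4*(b:ℝ)^3 + ((321131021160361823786493:ℝ)/1834430652453938)*(a:ℝ)^4*(b:ℝ)^4 + ((414860905421202286928538:ℝ)/4586076631134845)*(a:ℝ)^4*(b:ℝ)^5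 + ((118718739436581162438708:ℝ)/4586076631134845)*(a:ℝ)^4*(b:ℝ)^6 + ((102941183764224:ℝ)/30285563)*(a:ℝ)^4*(b:ℝ)^7 + (116640:ℝ)*(a:ℝ)^4*(b:ℝ)^8 + ((1218467563129977693165419311207:ℝ)/333340590564149063382564)*(a:ℝ)^5 + ((6093766026649697834094768845647:ℝ)/333340590564149063382564)*(a:ℝ)^5*(b:ℝ) + ((38810244826274425047235:ℝ)/917215326226969)*(a:ℝ)^5*(b:ℝ)^2 + ((246882519752490:ℝ)/4326509)*(a:ℝ)^5*(b:ℝ)^3 + ((1404350640357435:ℝ)/30285563)*(a:ℝ)^5*(b:ℝ)^4 + ((660037199405184:ℝ)/30285563)*(a:ℝ)^5*(b:ℝ)^5 + ((159461312857344:ℝ)/30285563)*(a:ℝ)^5*(b:ℝ)^6 + (466560:ℝ)*(a:ℝ)^5*(b:ℝ)^7 + ((444652540817813154160:ℝ)/917215326226969)*(a:ℝ)^6 + ((2104909924457440773160:ℝ)/917215326226969)*(a:ℝ)^6*(b:ℝ) + ((151473438871200:ℝ)/30285563)*(a:ℝ)^6*(b:ℝ)^2 + (6301800:ℝ)*(a:ℝ)^6*(b:ℝ)^3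 + (4665600:ℝ)*(a:ℝ)^6*(b:ℝ)^4 + (1866240:ℝ)*(a:ℝ)^6*(b:ℝ)^5 + (311040:ℝ)*(a:ℝ)^6*(b:ℝ)^6 := by positivity
    have hid : N^2 * ((((n+k:ℕ):ℝ))^2 + (1646010181/3634267560) * (((n+k:ℕ):ℝ)) + 611440808026517879/5943555313950759120) *
        (((n:ℕ):ℝ) - 1/40) -
        ((((n:ℕ):ℝ))^2 + (1646010181/3634267560) * (((n:ℕ):ℝ)) + 611440808026517879/5943555313950759120) *
        ((360 * ((n:ℕ):ℝ)^3)^2 * (((n+k:ℕ):ℝ) - 1/40)) = ((6038216753581465112082090053175726176159:ℝ)/2019081491197548400092727024706400) + ((51147619122135974723721685273947284553799:ℝ)/2019081491197548400092727024706400)*(b:ℝ) + ((904032201188867309667628999382512989045419:ℝ)/8076325964790193600370908098825600)*(b:ℝ)^2 + ((7438913261075543443660654883971629:ℝ)/22222706037609937558837600)*(b:ℝ)^3 + ((1878653544742009493568238822673577:ℝ)/2539737832869707149581440)*(b:ℝ)^4 + ((7928753465962114519388254717634127:ℝ)/6349344582174267873953600)*(b:ℝ)^5 + ((184516684694525455802506851216927:ℝ)/113381153253111926320600)*(b:ℝ)^6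 + ((4551029626429650702487035330922881:ℝ)/2777838254701242194854700)*(b:ℝ)^7 + ((116319066736571059023230607:ℝ)/91721532622696900)*(b:ℝ)^8 + ((622890934490126362655673:ℝ)/833832114751790)*(b:ℝ)^9 + ((684967714367735658240576:ℝ)/2084580286879475)*(b:ℝ)^10 + ((2394930138300013074907536:ℝ)/22930383155674225)*(b:ℝ)^11 + ((519225755748042802240314:ℝ)/22930383155674225)*(b:ℝ)^12 + ((2266681988573028:ℝ)/757139075)*(b:ℝ)^13 + ((909792:ℝ)/5)*(b:ℝ)^14 + ((16545279113066963979996175554275469773987:ℝ)/1514311118398161300069545268529800)*(a:ℝ) + ((236992947202599546648331426640317806018923:ℝ)/3028622236796322600139090537059600)*(a:ℝ)*(b:ℝ) + ((880781082312017348327578465901971049002669:ℝ)/3028622236796322600139090537059600)*(a:ℝ)*(b:ℝ)^2 + ((3306987098879318123299987285587679:ℝ)/4444541207521987511767520)*(a:ℝ)*(b:ℝ)^3 + ((57801367924925265628974067013507:ℝ)/39683403638589174212210)*(a:ℝ)*(b:ℝ)^4 + ((7184585564165281458438423816476019:ℝ)/3174672291087133936976800)*(a:ℝ)*(b:ℝ)^5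 + ((553423753486636844535593195586263:ℝ)/198417018192945871061050)*(a:ℝ)*(b:ℝ)^6 + ((7470441009936969644398071859792951:ℝ)/2777838254701242194854700)*(a:ℝ)*(b:ℝ)^7 + ((36656074678609184995716417:ℝ)/18344306524539380)*(a:ℝ)*(b:ℝ)^8 + ((938879944961748501304953:ℝ)/833832114751790)*(a:ℝ)*(b:ℝ)^9 + ((981138470326431041743164:ℝ)/2084580286879475)*(a:ℝ)*(b:ℝ)^10 + ((3230042975410632235087248:ℝ)/22930383155674225)*(a:ℝ)*(b:ℝ)^11 + ((651255486795274198770684:ℝ)/22930383155674225)*(a:ℝ)*(b:ℝ)^12 + ((520067533778208:ℝ)/151427815)*(a:ℝ)*(b:ℝ)^13 + (186624:ℝ)*(a:ℝ)*(b:ℝ)^14 + ((3210143224286547227142377101063416959783:ℝ)/173064127816932720007948030689120)*(a:ℝ)^2 + ((19596183033336640573709062101936189459799:ℝ)/173064127816932720007948030689120)*(a:ℝ)^2*(b:ℝ) + ((47207043864757442724097624443046373873155:ℝ)/138451302253546176006358424551296)*(a:ℝ)^2*(b:ℝ)^2 + ((429453836361787781509035792055497:ℝ)/634934458217426787395360)*(a:ℝ)^2*(b:ℝ)^3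 + ((517600502458361312540630401964641:ℝ)/507947566573941429916288)*(a:ℝ)^2*(b:ℝ)^4 + ((231807501692431416581605473624837:ℝ)/181409845204979082112960)*(a:ℝ)^2*(b:ℝ)^5 + ((216285865593740106405901899877807:ℝ)/158733614554356696848840)*(a:ℝ)^2*(b:ℝ)^6 + ((330170872342520107907722381137691:ℝ)/277783825470124219485470)*(a:ℝ)^2*(b:ℝ)^7 + ((7398614907876534350702643:ℝ)/9172153262269690)*(a:ℝ)^2*(b:ℝ)^8 + ((12390975539873748:ℝ)/30285563)*(a:ℝ)^2*(b:ℝ)^9 + ((2052367445067552:ℝ)/13766165)*(a:ℝ)^2*(b:ℝ)^10 + ((5571046875585024:ℝ)/151427815)*(a:ℝ)^2*(b:ℝ)^11 + ((831634745404032:ℝ)/151427815)*(a:ℝ)^2*(b:ℝ)^12 + (373248:ℝ)*(a:ℝ)^2*(b:ℝ)^13 + ((11342501285830664095613631184552822201277:ℝ)/605724447359264520027818107411920)*(a:ℝ)^3 + ((31314457056406385125243217439309832116143:ℝ)/302862223679632260013909053705960)*(a:ℝ)^3*(b:ℝ) + ((650105955087789963271666216242041908996871:ℝ)/2422897789437058080111272429647680)*(a:ℝ)^3*(b:ℝ)^2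 + ((374356564783398086546688318865465:ℝ)/888908241504397502353504)*(a:ℝ)^3*(b:ℝ)^3 + ((25941279560550092849340903:ℝ)/58701780878526016)*(a:ℝ)^3*(b:ℝ)^4 + ((12710439617092106038662771:ℝ)/36688613049078760)*(a:ℝ)^3*(b:ℝ)^5 + ((1099699796704254253132521:ℝ)/4586076631134845)*(a:ℝ)^3*(b:ℝ)^6 + ((736409651332463372619354:ℝ)/4586076631134845)*(a:ℝ)^3*(b:ℝ)^7 + ((405278829959904:ℝ)/4326509)*(a:ℝ)^3*(b:ℝ)^8 + (41135040:ℝ)*(a:ℝ)^3*(b:ℝ)^9 + (12317184:ℝ)*(a:ℝ)^3*(b:ℝ)^10 + (2239488:ℝ)*(a:ℝ)^3*(b:ℝ)^11 + (186624:ℝ)*(a:ℝ)^3*(b:ℝ)^12 + ((37585136382350626352172733561481:ℝ)/3333405905641490633825640)*(a:ℝ)^4 + ((8190554532435631962847412440124:ℝ)/138891912735062109742735)*(a:ℝ)^4*(b:ℝ) + ((47643071047913330832536035925713:ℝ)/333340590564149063382564)*(a:ℝ)^4*(b:ℝ)^2 + ((19290750786236755835223:ℝ)/95295098828776)*(a:ℝ)^4*(b:ℝ)^3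 + ((321131021160361823786493:ℝ)/1834430652453938)*(a:ℝ)^4*(b:ℝ)^4 + ((414860905421202286928538:ℝ)/4586076631134845)*(a:ℝ)^4*(b:ℝ)^5 + ((118718739436581162438708:ℝ)/4586076631134845)*(a:ℝ)^4*(b:ℝ)^6 + ((102941183764224:ℝ)/30285563)*(a:ℝ)^4*(b:ℝ)^7 + (116640:ℝ)*(a:ℝ)^4*(b:ℝ)^8 + ((1218467563129977693165419311207:ℝ)/333340590564149063382564)*(a:ℝ)^5 + ((6093766026649697834094768845647:ℝ)/333340590564149063382564)*(a:ℝ)^5*(b:ℝ) + ((38810244826274425047235:ℝ)/917215326226969)*(a:ℝ)^5*(b:ℝ)^2 + ((246882519752490:ℝ)/4326509)*(a:ℝ)^5*(b:ℝ)^3 + ((1404350640357435:ℝ)/30285563)*(a:ℝ)^5*(b:ℝ)^4 + ((660037199405184:ℝ)/30285563)*(a:ℝ)^5*(b:ℝ)^5 + ((159461312857344:ℝ)/30285563)*(a:ℝ)^5*(b:ℝ)^6 + (466560:ℝ)*(a:ℝ)^5*(b:ℝ)^7 + ((444652540817813154160:ℝ)/917215326226969)*(a:ℝ)^6 + ((2104909924457440773160:ℝ)/917215326226969)*(a:ℝ)^6*(b:ℝ)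 + ((151473438871200:ℝ)/30285563)*(a:ℝ)^6*(b:ℝ)^2 + (6301800:ℝ)*(a:ℝ)^6*(b:ℝ)^3 + (4665600:ℝ)*(a:ℝ)^6*(b:ℝ)^4 + (1866240:ℝ)*(a:ℝ)^6*(b:ℝ)^5 + (311040:ℝ)*(a:ℝ)^6*(b:ℝ)^6 := by
      rw [hNdef, hmn, hmk, hnk]; ring
    rw [← hid] at hposG
    exact sub_pos.mp hposG
  have hQlt : Q ((n:ℕ):ℝ) < B^2 * Q ((n+k:ℕ):ℝ) := by
    have e1 : B^2 * Q ((n+k:ℕ):ℝ) =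
        (N^2 * ((((n+k:ℕ):ℝ))^2 + (1646010181/3634267560) * (((n+k:ℕ):ℝ)) + 611440808026517879/5943555313950759120)) /
          ((360 * ((n:ℕ):ℝ)^3)^2 * (((n+k:ℕ):ℝ) - 1/40)) := by
      rw [hB]; unfold Q; rw [div_pow, div_mul_div_comm]
    have hdd : (0:ℝ) < (360 * ((n:ℕ):ℝ)^3)^2 * (((n+k:ℕ):ℝ) - 1/40) :=
      mul_pos (pow_pos (by nlinarith [hnpos]) 2) hden2
    rw [e1]
    unfold Q
    rw [div_lt_div_iff₀ hden1 hdd]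
    exact hkey
  have htel := telescope n hn (k := k)
  have hQnk : 0 < Q ((n+k:ℕ):ℝ) := Q_pos _ (by rw [hnk]; linarith)
  have hPB2 : P^2 < B^2 := by
    have h1 : P^2 * Q ((n+k:ℕ):ℝ) < B^2 * Q ((n+k:ℕ):ℝ) := lt_of_le_of_lt htel hQlt
    exact lt_of_mul_lt_mul_right h1 hQnk.le
  exact lt_of_pow_lt_pow_left₀ 2 hBpos.le hPB2
end
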